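/- Let K be a field and (A,Φ) a nondegenerate linear extended associative semigroup over K (i.e. Φ is a linear bijection). Let V be a K-vector space with a linear map * : A → Hom(V ⊗ V, V), a ↦ *_a, and define a bilinear product ⋆ on V ⊗ A by (x ⊗ a) ⋆ (y ⊗ b) = Σ_i (x *_{d_i} y) ⊗ c_i, where Φ(a⊗b) = Σ_i c_i ⊗ d_i. If ⋆ is associative, then (V,*) is a Φ-associative algebra. -/

import Mathlib

open TensorProduct

section Defs

variable (K : Type) [Field K]
variable (A : Type) [AddCommGroup A] [Module K A]

/-- The "right reassociated" version of `Φ ⊗ Id` acting on `A ⊗ (A ⊗ A)`. -/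
noncomputable def phiIdMap (Φ : A ⊗[K] A →ₗ[K] A ⊗[K] A) :
    A ⊗[K] (A ⊗[K] A) →ₗ[K] A ⊗[K] (A ⊗[K] A) :=
  (TensorProduct.assoc K A A A).toLinearMap ∘ₗ (LinearMap.rTensor A Φ) ∘ₗ
    (TensorProduct.assoc K A A A).symm.toLinearMap

/-- `(A, Φ)` is a linear extended associative semigroup (ℓEAS):
`(Id ⊗ Φ) ∘ (Φ ⊗ Id) ∘ (Id ⊗ Φ) = (Φ ⊗ Id) ∘ (Id ⊗ τ) ∘ (Φ ⊗ Id)` on `A^{⊗3}`. -/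
def IsLEAS (Φ : A ⊗[K] A →ₗ[K] A ⊗[K] A) : Prop :=
  (LinearMap.lTensor A Φ) ∘ₗ phiIdMap K A Φ ∘ₗ (LinearMap.lTensor A Φ)
    = phiIdMap K A Φ ∘ₗ (LinearMap.lTensor A (TensorProduct.comm K A A).toLinearMap) ∘ₗ
        phiIdMap K A Φ

variable (V : Type) [AddCommGroup V] [Module K V]

/-- Evaluation `a ⊗ (x ⊗ y) ↦ x *_a y` of a family of products `st`. -/
noncomputable def evalSt (st : A →ₗ[K] V →ₗ[K] V →ₗ[K] V) :
    A ⊗[K] (V ⊗[K] V) →ₗ[K] V :=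
  TensorProduct.lift ((TensorProduct.lift.equiv (RingHom.id K) V V V).toLinearMap ∘ₗ st)

/-- The Sweedler-type trilinear evaluation
`(c ⊗ d) ⊗ ((x ⊗ y) ⊗ z) ↦ (x *_d y) *_c z`. -/
noncomputable def rightTri (st : A →ₗ[K] V →ₗ[K] V →ₗ[K] V) :
    (A ⊗[K] A) ⊗[K] ((V ⊗[K] V) ⊗[K] V) →ₗ[K] V :=
  evalSt K A V st
    ∘ₗ (TensorProduct.leftComm K V A V).toLinearMap
    ∘ₗ (TensorProduct.map (evalSt K A V st) LinearMap.id)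
    ∘ₗ (TensorProduct.tensorTensorTensorComm K A A (V ⊗[K] V) V).toLinearMap
    ∘ₗ (LinearMap.rTensor ((V ⊗[K] V) ⊗[K] V) (TensorProduct.comm K A A).toLinearMap)

/-- `(V, st)` is a `Φ`-associative algebra:
`x *_a (y *_b z) = Σ (x *_{d_i} y) *_{c_i} z` where `Φ(a ⊗ b) = Σ c_i ⊗ d_i`. -/
def IsPhiAssoc (Φ : A ⊗[K] A →ₗ[K] A ⊗[K] A)
    (st : A →ₗ[K] V →ₗ[K] V →ₗ[K] V) : Prop :=
  ∀ (a b : A) (x y z : V),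
    st a x (st b y z) = rightTri K A V st ((Φ (a ⊗ₜ b)) ⊗ₜ ((x ⊗ₜ y) ⊗ₜ z))

/-- The space `T_A(V) = ⊕_{n≥1} A^{⊗(n−1)} ⊗ V^{⊗n}` of `A`-typed words, modelled as
`V ⊗ T(A ⊗ V)`: the typed word `a₁…a_{n−1}x₁…x_n` is `x₁ ⊗ (a₁⊗x₂)⋯(a_{n−1}⊗x_n)`. -/
abbrev TAlg : Type := V ⊗[K] TensorAlgebra K (A ⊗[K] V)

/-- The inclusion of `V` in `T_A(V)` as typed words of length one. -/
noncomputable def iotaTA : V →ₗ[K] TAlg K A V :=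
  (TensorProduct.mk K V (TensorAlgebra K (A ⊗[K] V))).flip 1

/-- The appending operation: `appTA (a ⊗ z) u = u · (a z)`. -/
noncomputable def appTA : (A ⊗[K] V) →ₗ[K] (TAlg K A V →ₗ[K] TAlg K A V) :=
  (LinearMap.lTensorHom V)
    ∘ₗ (LinearMap.mul K (TensorAlgebra K (A ⊗[K] V))).flip
    ∘ₗ (TensorAlgebra.ι K)

/-- The Sweedler-type map `(c ⊗ d) ⊗ ((u ⊗ v) ⊗ z) ↦ (u *_d v) · (c z)` used in the
recursive definition of the products on `T_A(V)`. -/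
noncomputable def recTA (st : A →ₗ[K] TAlg K A V →ₗ[K] TAlg K A V →ₗ[K] TAlg K A V) :
    (A ⊗[K] A) ⊗[K] ((TAlg K A V ⊗[K] TAlg K A V) ⊗[K] V) →ₗ[K] TAlg K A V :=
  (TensorProduct.lift (appTA K A V).flip)
    ∘ₗ (TensorProduct.map (evalSt K A (TAlg K A V) st) (LinearMap.id (M := A ⊗[K] V)))
    ∘ₗ (TensorProduct.tensorTensorTensorComm K A A (TAlg K A V ⊗[K] TAlg K A V) V).toLinearMap
    ∘ₗ (LinearMap.rTensor ((TAlg K A V ⊗[K] TAlg K A V) ⊗[K] V)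
          (TensorProduct.comm K A A).toLinearMap)

/-- `st` satisfies the defining recursion of the products `*_a` of `T_A(V)`:
`u *_a z = u·(a z)` for `z ∈ V`, and `u *_a (v·(b z)) = Σ (u *_{d_i} v)·(c_i z)`
where `Φ(a ⊗ b) = Σ c_i ⊗ d_i`. -/
def SatisfiesRecTA (Φ : A ⊗[K] A →ₗ[K] A ⊗[K] A)
    (st : A →ₗ[K] TAlg K A V →ₗ[K] TAlg K A V →ₗ[K] TAlg K A V) : Prop :=
  (∀ (a : A) (u : TAlg K A V) (z : V), st a u (iotaTA K A V z) = appTA K A V (a ⊗ₜ z) u) ∧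
  (∀ (a b : A) (u v : TAlg K A V) (z : V),
    st a u (appTA K A V (b ⊗ₜ z) v)
      = recTA K A V st ((Φ (a ⊗ₜ b)) ⊗ₜ ((u ⊗ₜ v) ⊗ₜ z)))

/-- The Sweedler-type map `(x ⊗ y) ⊗ (c ⊗ d) ↦ (x *_d y) ⊗ c` used to define the
associative product `⋆` on `V ⊗ A`. -/
noncomputable def sweedlerMul (st : A →ₗ[K] V →ₗ[K] V →ₗ[K] V) :
    (V ⊗[K] V) ⊗[K] (A ⊗[K] A) →ₗ[K] V ⊗[K] A :=
  (LinearMap.rTensor A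
      (evalSt K A V st ∘ₗ (TensorProduct.comm K (V ⊗[K] V) A).toLinearMap))
    ∘ₗ (TensorProduct.assoc K (V ⊗[K] V) A A).symm.toLinearMap
    ∘ₗ (LinearMap.lTensor (V ⊗[K] V) (TensorProduct.comm K A A).toLinearMap)

end Defs


noncomputable section Aux1137
variable (K : Type) [Field K] (A : Type) [AddCommGroup A] [Module K A]
variable (V : Type) [AddCommGroup V] [Module K V]
variable (st : A →ₗ[K] V →ₗ[K] V →ₗ[K] V)

@[simp] lemma evalSt_tmul (a : A) (x y : V) :
    evalSt K A V st (a ⊗ₜ (x ⊗ₜ y)) = st a x y := by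
  simp [evalSt]

@[simp] lemma sweedlerMul_tmul (v w : V) (c d : A) :
    sweedlerMul K A V st ((v ⊗ₜ w) ⊗ₜ (c ⊗ₜ d)) = (st d v w) ⊗ₜ c := by
  simp [sweedlerMul]

@[simp] lemma rightTri_tmul (c d : A) (x y z : V) :
    rightTri K A V st ((c ⊗ₜ d) ⊗ₜ ((x ⊗ₜ y) ⊗ₜ z)) = st c (st d x y) z := by
  simp [rightTri]

@[simp] lemma phiIdMap_tmul (Φ : A ⊗[K] A →ₗ[K] A ⊗[K] A) (p q r : A) :
    phiIdMap K A Φ (p ⊗ₜ (q ⊗ₜ r))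
      = (TensorProduct.assoc K A A A) ((Φ (p ⊗ₜ q)) ⊗ₜ r) := by
  simp [phiIdMap]

def Gmap (x y z : V) : A ⊗[K] A →ₗ[K] V :=
  TensorProduct.lift (LinearMap.mk₂ K (fun b c => st b x (st c y z))
    (fun b b' c => by simp) (fun k b c => by simp)
    (fun b c c' => by simp) (fun k b c => by simp))

def Pmap (x y z : V) : A ⊗[K] (A ⊗[K] A) →ₗ[K] V ⊗[K] A :=
  (TensorProduct.comm K A V).toLinearMap ∘ₗ LinearMap.lTensor A (Gmap K A V st x y z)

def Qmap (x y z : V) : A ⊗[K] (A ⊗[K] A) →ₗ[K] V ⊗[K] A :=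
  (TensorProduct.comm K A V).toLinearMap ∘ₗ
    LinearMap.lTensor A ((rightTri K A V st) ∘ₗ
      ((TensorProduct.mk K (A ⊗[K] A) ((V ⊗[K] V) ⊗[K] V)).flip ((x ⊗ₜ y) ⊗ₜ z)))

@[simp] lemma Pmap_tmul (x y z : V) (w b c : A) :
    Pmap K A V st x y z (w ⊗ₜ (b ⊗ₜ c)) = (st b x (st c y z)) ⊗ₜ w := by
  simp [Pmap, Gmap]

@[simp] lemma Qmap_tmul (x y z : V) (w : A) (s : A ⊗[K] A) :
    Qmap K A V st x y z (w ⊗ₜ s)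
      = (rightTri K A V st (s ⊗ₜ ((x ⊗ₜ y) ⊗ₜ z))) ⊗ₜ w := by
  simp [Qmap]

end Aux1137

/-- Proposition 3.3 (2). Let `(A, Φ)` be a nondegenerate linear
extended associative semigroup (i.e. `Φ` is bijective), `V` a vector space with a linear
family of products `* : A → Hom(V ⊗ V, V)`, and `⋆` the bilinear product on `V ⊗ A`
determined by `(x ⊗ a) ⋆ (y ⊗ b) = Σ (x *_{d_i} y) ⊗ c_i` where `Φ(a⊗b) = Σ c_i ⊗ d_i`.
If `⋆` is associative, then `(V, *)` is a `Φ`-associative algebra. -/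
theorem associative_on_tensor_gives_phi_assoc
    (K : Type) [Field K] (A : Type) [AddCommGroup A] [Module K A]
    (Φ : A ⊗[K] A →ₗ[K] A ⊗[K] A) (hΦ : IsLEAS K A Φ)
    (hbij : Function.Bijective Φ)
    (V : Type) [AddCommGroup V] [Module K V]
    (st : A →ₗ[K] V →ₗ[K] V →ₗ[K] V)
    (mul : V ⊗[K] A →ₗ[K] V ⊗[K] A →ₗ[K] V ⊗[K] A)
    (hmul : ∀ (x y : V) (a b : A),
      mul (x ⊗ₜ a) (y ⊗ₜ b) = sweedlerMul K A V st ((x ⊗ₜ y) ⊗ₜ (Φ (a ⊗ₜ b))))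
    (hassoc : ∀ u v w : V ⊗[K] A, mul (mul u v) w = mul u (mul v w)) :
    IsPhiAssoc K A V Φ st := by
  intro a b x y z
  set τ : A ⊗[K] A →ₗ[K] A ⊗[K] A := (TensorProduct.comm K A A).toLinearMap with hτ
  have innerA : ∀ (x y z : V) (d : A) (t : A ⊗[K] A),
      sweedlerMul K A V st ((x ⊗ₜ st d y z) ⊗ₜ t)
        = Pmap K A V st x y z ((TensorProduct.assoc K A A A) (t ⊗ₜ d)) := by
    intro x y z d t
    induction t using TensorProduct.induction_on with
    | zero => simp
    | tmul c' d' => simp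
    | add s s' hs hs' => simp [tmul_add, add_tmul, hs, hs']
  have innerB : ∀ (x y z : V) (d : A) (t : A ⊗[K] A),
      sweedlerMul K A V st ((st d x y ⊗ₜ z) ⊗ₜ t)
        = Qmap K A V st x y z ((TensorProduct.assoc K A A A) (t ⊗ₜ d)) := by
    intro x y z d t
    induction t using TensorProduct.induction_on with
    | zero => simp
    | tmul c' d' => simp
    | add s s' hs hs' => simp [tmul_add, add_tmul, hs, hs']
  have claimA : ∀ (x y z : V) (p : A) (s : A ⊗[K] A),
      mul (x ⊗ₜ p) (sweedlerMul K A V st ((y ⊗ₜ z) ⊗ₜ s))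
        = Pmap K A V st x y z (phiIdMap K A Φ (p ⊗ₜ s)) := by
    intro x y z p s
    induction s using TensorProduct.induction_on with
    | zero => simp
    | tmul c d =>
        rw [sweedlerMul_tmul, hmul, innerA, phiIdMap_tmul]
    | add s s' hs hs' => simp only [tmul_add, map_add, hs, hs']
  have claimB : ∀ (x y z : V) (r : A) (s : A ⊗[K] A),
      mul (sweedlerMul K A V st ((x ⊗ₜ y) ⊗ₜ s)) (z ⊗ₜ r)
        = Qmap K A V st x y z (phiIdMap K A Φ
            (LinearMap.lTensor A τ ((TensorProduct.assoc K A A A) (s ⊗ₜ r)))) := by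
    intro x y z r s
    induction s using TensorProduct.induction_on with
    | zero => simp
    | tmul c d =>
        rw [sweedlerMul_tmul, hmul, innerB]
        simp [hτ]
    | add s s' hs hs' =>
        simp only [tmul_add, add_tmul, map_add, LinearMap.add_apply, hs, hs']
  have key : (Pmap K A V st x y z) ∘ₗ phiIdMap K A Φ ∘ₗ LinearMap.lTensor A Φ
      = (Qmap K A V st x y z) ∘ₗ phiIdMap K A Φ ∘ₗ LinearMap.lTensor A τ ∘ₗ
          phiIdMap K A Φ := by
    ext p q r
    simp only [TensorProduct.AlgebraTensorModule.curry_apply, TensorProduct.curry_apply,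
      LinearMap.coe_restrictScalars, LinearMap.coe_comp, Function.comp_apply,
      LinearMap.lTensor_tmul, phiIdMap_tmul]
    rw [← claimA x y z p (Φ (q ⊗ₜ r)), ← hmul y z q r,
      ← claimB x y z r (Φ (p ⊗ₜ q)), ← hmul x y p q]
    exact (hassoc _ _ _).symm
  have hphis : Function.Surjective (phiIdMap K A Φ) := by
    have hr : Function.Surjective (LinearMap.rTensor (R := K) A Φ) :=
      LinearMap.rTensor_surjective A hbij.2
    simpa [phiIdMap, LinearMap.coe_comp] using
      ((TensorProduct.assoc K A A A).surjective.comp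
        (hr.comp (TensorProduct.assoc K A A A).symm.surjective))
  have hls : Function.Surjective (LinearMap.lTensor (R := K) A Φ) :=
    LinearMap.lTensor_surjective A hbij.2
  have key2 : ∀ t, Pmap K A V st x y z t
      = Qmap K A V st x y z (LinearMap.lTensor A Φ t) := by
    intro t
    obtain ⟨e, he⟩ := (hphis.comp hls) t
    have h1 := LinearMap.congr_fun key e
    have h2 := LinearMap.congr_fun hΦ e
    simp only [LinearMap.coe_comp, Function.comp_apply] at h1 h2 he
    rw [← he, h1, ← h2]
  have hfin : ∀ w : A, (st a x (st b y z)) ⊗ₜ[K] w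
      = (rightTri K A V st ((Φ (a ⊗ₜ b)) ⊗ₜ ((x ⊗ₜ y) ⊗ₜ z))) ⊗ₜ[K] w := by
    intro w
    have := key2 (w ⊗ₜ (a ⊗ₜ b))
    simpa using this
  by_cases hA : ∃ w : A, w ≠ 0
  · obtain ⟨w, hw⟩ := hA
    obtain ⟨φ, hφ⟩ : ∃ φ : Module.Dual K A, φ w ≠ 0 := by
      by_contra h
      push_neg at h
      exact hw ((Module.forall_dual_apply_eq_zero_iff K w).mp h)
    have hC := congrArg
      ((TensorProduct.rid K V).toLinearMap ∘ₗ LinearMap.lTensor V φ) (hfin w)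
    simp only [LinearMap.coe_comp, Function.comp_apply, LinearMap.lTensor_tmul,
      LinearEquiv.coe_coe, TensorProduct.rid_tmul] at hC
    exact smul_right_injective V hφ hC
  · push_neg at hA
    rw [hA a, hA b]
    simp
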